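/- Let H be symmetric with a unit vector v satisfying vᵀHv = α where α ≤ -ε_E < 0, let g ∈ ℝⁿ, σ > 0, and let w = βv with ‖w‖ = |α| and wᵀg ≤ 0. Set d = w/(2σ). Then m(d) = gᵀd + (1/2)dᵀHd + (σ/3)‖d‖³ ≤ α³/(12σ²), and hence -m(d) ≥ ε_E³/(12σ²). -/

import Mathlib

open RealInnerProductSpace

theorem stmt_15 (n : ℕ) (H : EuclideanSpace ℝ (Fin n) →L[ℝ] EuclideanSpace ℝ (Fin n))
    (hsym : ∀ x y : EuclideanSpace ℝ (Fin n), ⟪H x, y⟫ = ⟪x, H y⟫)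
    (g v w d : EuclideanSpace ℝ (Fin n)) (σ α εE β : ℝ)
    (hσ : 0 < σ) (hε : 0 < εE)
    (hv : ‖v‖ = 1) (hα : α = ⟪v, H v⟫) (hαneg : α ≤ -εE)
    (hw : w = β • v) (hwnorm : ‖w‖ = |α|) (hwg : ⟪w, g⟫ ≤ 0)
    (hd : d = (1 / (2 * σ)) • w) :
    ⟪g, d⟫ + 1 / 2 * ⟪d, H d⟫ + σ / 3 * ‖d‖ ^ 3 ≤ α ^ 3 / (12 * σ ^ 2) ∧
    εE ^ 3 / (12 * σ ^ 2) ≤ -(⟪g, d⟫ + 1 / 2 * ⟪d, H d⟫ + σ / 3 * ‖d‖ ^ 3) := by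
  have hαlt : α < 0 := lt_of_le_of_lt hαneg (by linarith)
  have hβ2 : β ^ 2 = α ^ 2 := by
    have := hwnorm
    rw [hw, norm_smul, hv, mul_one] at this
    have : |β| = |α| := by simpa using this
    calc β ^ 2 = |β| ^ 2 := (sq_abs β).symm
      _ = |α| ^ 2 := by rw [this]
      _ = α ^ 2 := sq_abs α
  have hdw : d = (β / (2 * σ)) • v := by
    rw [hd, hw, smul_smul]; ring_nf
  have hnd : ‖d‖ = |α| / (2 * σ) := by
    rw [hd, norm_smul, hwnorm]
    have : ‖(1 : ℝ) / (2 * σ)‖ = 1 / (2 * σ) := by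
      rw [Real.norm_eq_abs, abs_of_pos]; positivity
    rw [this]; ring
  have hnd3 : ‖d‖ ^ 3 = -α ^ 3 / (8 * σ ^ 3) := by
    rw [hnd]
    rw [abs_of_neg hαlt]
    field_simp; ring
  have hdHd : ⟪d, H d⟫ = α ^ 3 / (4 * σ ^ 2) := by
    rw [hdw, map_smul, real_inner_smul_left, real_inner_smul_right, ← hα]
    field_simp
    linear_combination 4 * α * hβ2
  have hgd : ⟪g, d⟫ ≤ 0 := by
    rw [hd, real_inner_smul_right, real_inner_comm]
    have : (0:ℝ) ≤ 1 / (2 * σ) := by positivity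
    exact mul_nonpos_of_nonneg_of_nonpos this hwg
  have hα3 : α ^ 3 ≤ -εE ^ 3 := by nlinarith [sq_nonneg (α - εE), sq_nonneg (α + εE), mul_pos hε hε]
  constructor
  · rw [hdHd, hnd3]
    have h1 : 1 / 2 * (α ^ 3 / (4 * σ ^ 2)) + σ / 3 * (-α ^ 3 / (8 * σ ^ 3)) = α ^ 3 / (12 * σ ^ 2) := by
      field_simp; ring
    linarith
  · rw [hdHd, hnd3]
    have h1 : 1 / 2 * (α ^ 3 / (4 * σ ^ 2)) + σ / 3 * (-α ^ 3 / (8 * σ ^ 3)) = α ^ 3 / (12 * σ ^ 2) := by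
      field_simp; ring
    have h2 : α ^ 3 / (12 * σ ^ 2) ≤ -εE ^ 3 / (12 * σ ^ 2) := by
      apply div_le_div_of_nonneg_right hα3 <;> positivity
    have h2' : α ^ 3 / (12 * σ ^ 2) ≤ -(εE ^ 3 / (12 * σ ^ 2)) := by
      rw [neg_div] at h2; exact h2
    linarith
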